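/- Let F ∈ ℂ[x, y, z] be a homogeneous polynomial of degree 3, and let P, Q ∈ ℂ³ ∖ {0} be non-proportional vectors (two distinct points of ℙ²) such that F and all three first-order partial derivatives of F vanish at P and at Q (i.e. F is singular at both points). Then F is divisible by a nonzero linear form L vanishing at P and at Q: there exists a homogeneous polynomial C of degree 2 with C(P) = C(Q) = 0 such that F = L·C. -/

import Mathlib

open MvPolynomial

namespace CubicAux

/-- Linear substitution by a matrix. -/
noncomputable def lsub (N : Matrix (Fin 3) (Fin 3) ℂ) :
    MvPolynomial (Fin 3) ℂ →ₐ[ℂ] MvPolynomial (Fin 3) ℂ :=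
  aeval (fun i => ∑ j, MvPolynomial.C (N i j) * X j)

lemma eval_lsub (N : Matrix (Fin 3) (Fin 3) ℂ) (v : Fin 3 → ℂ) (F : MvPolynomial (Fin 3) ℂ) :
    eval v (lsub N F) = eval (N.mulVec v) F := by
  induction F using MvPolynomial.induction_on with
  | C a => simp [lsub]
  | add p q hp hq => simp [hp, hq]
  | mul_X p i hp =>
    have hXi : eval v (lsub N (X i)) = N.mulVec v i := by
      simp [lsub, Matrix.mulVec, dotProduct]
    rw [map_mul, map_mul, hp, hXi, map_mul, eval_X]


lemma lsub_lsub (N N' : Matrix (Fin 3) (Fin 3) ℂ) (F : MvPolynomial (Fin 3) ℂ) :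
    lsub N (lsub N' F) = lsub (N' * N) F := by
  induction F using MvPolynomial.induction_on with
  | C a => simp [lsub]
  | add p q hp hq => simp [hp, hq]
  | mul_X p i hp =>
    rw [map_mul, map_mul, hp]
    simp only [map_mul, hp, lsub, aeval_X, map_sum, map_mul, aeval_C]
    congr 1
    simp only [algebraMap_eq, Finset.mul_sum, ← mul_assoc, ← map_mul, Matrix.mul_apply,
      map_sum, Finset.sum_mul]
    exact Finset.sum_comm

lemma lsub_one (F : MvPolynomial (Fin 3) ℂ) : lsub 1 F = F := by
  have h : (fun i => ∑ j, MvPolynomial.C ((1 : Matrix (Fin 3) (Fin 3) ℂ) i j) * X j)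
      = (X : Fin 3 → MvPolynomial (Fin 3) ℂ) := by
    funext i
    simp [Matrix.one_apply, apply_ite MvPolynomial.C, ite_mul, Finset.sum_ite_eq]
  rw [lsub, h, aeval_X_left_apply]

lemma pderiv_lsub (N : Matrix (Fin 3) (Fin 3) ℂ) (F : MvPolynomial (Fin 3) ℂ) (j : Fin 3) :
    pderiv j (lsub N F) = ∑ i, lsub N (pderiv i F) * MvPolynomial.C (N i j) := by
  induction F using MvPolynomial.induction_on with
  | C a => simp [lsub]
  | add p q hp hq =>
    simp only [map_add, hp, hq, add_mul, ← Finset.sum_add_distrib]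
  | mul_X p i hp =>
    have hXi : lsub N (X i) = ∑ k, MvPolynomial.C (N i k) * X k := by simp [lsub]
    have hdXi : pderiv j (lsub N (X i)) = MvPolynomial.C (N i j) := by
      rw [hXi]
      simp [pderiv_X, Pi.single_apply, mul_ite, Finset.sum_ite_eq', eq_comm]
    rw [map_mul, pderiv_mul, hp, hdXi]
    have hrhs : ∀ k : Fin 3, lsub N (pderiv k (p * X i)) * MvPolynomial.C (N k j)
        = lsub N (pderiv k p) * MvPolynomial.C (N k j) * lsub N (X i)
          + (if i = k then lsub N p * MvPolynomial.C (N k j) else 0) := by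
      intro k
      rw [pderiv_mul, pderiv_X, Pi.single_apply]
      split_ifs with h
      · subst h; simp [map_add, add_mul]; ring
      · simp [map_add, add_mul]; ring
    rw [Finset.sum_congr rfl (fun k _ => hrhs k), Finset.sum_add_distrib, ← Finset.sum_mul,
      Finset.sum_ite_eq, if_pos (Finset.mem_univ i)]

lemma coeff_pderiv (p : MvPolynomial (Fin 3) ℂ) (j : Fin 3) (d : Fin 3 →₀ ℕ) :
    coeff d (pderiv j p) = (d j + 1) * coeff (d + Finsupp.single j 1) p := by
  induction p using MvPolynomial.induction_on' with
  | add p q hp hq => simp [hp, hq, mul_add]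
  | monomial m a =>
    rw [pderiv_monomial, coeff_monomial, coeff_monomial]
    by_cases hm : m = d + Finsupp.single j 1
    · subst hm
      rw [if_pos (add_tsub_cancel_right _ _), if_pos rfl, Finsupp.add_apply,
        Finsupp.single_eq_same]
      push_cast
      ring
    · rw [if_neg hm, mul_zero]
      by_cases h2 : m - Finsupp.single j 1 = d
      · by_cases h3 : m j = 0
        · rw [if_pos h2, h3]; simp
        · exfalso
          apply hm
          rw [← h2, tsub_add_cancel_of_le]
          rw [Finsupp.single_le_iff]
          omega
      · rw [if_neg h2]

lemma isHomogeneous_iff3 (p : MvPolynomial (Fin 3) ℂ) (n : ℕ) :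
    p.IsHomogeneous n ↔ ∀ d : Fin 3 →₀ ℕ, coeff d p ≠ 0 → d 0 + d 1 + d 2 = n := by
  have key : ∀ d : Fin 3 →₀ ℕ, (Finsupp.weight (1 : Fin 3 → ℕ)) d = d 0 + d 1 + d 2 := by
    intro d
    rw [Finsupp.weight_apply, Finsupp.sum_fintype _ _ (by simp), Fin.sum_univ_three]
    simp
  constructor
  · intro h d hd; rw [← key d]; exact h hd
  · intro h d hd; rw [key d]; exact h d hd

lemma eval_single (p : MvPolynomial (Fin 3) ℂ) {n : ℕ} (hp : p.IsHomogeneous n) (i : Fin 3) :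
    eval (Pi.single i (1 : ℂ)) p = coeff (Finsupp.single i n) p := by
  rw [eval_eq, Finset.sum_eq_single (Finsupp.single i n)]
  · rw [Finset.prod_eq_one, mul_one]
    intro k hk
    have : k = i := Finset.mem_singleton.mp (Finsupp.support_single_subset hk)
    subst this
    simp
  · intro b hb hbne
    have hbd : b 0 + b 1 + b 2 = n :=
      (isHomogeneous_iff3 p n).mp hp b (MvPolynomial.mem_support_iff.mp hb)
    have hex : ∃ k ∈ b.support, k ≠ i := by
      by_contra hno
      push_neg at hno
      have hz : ∀ k, k ≠ i → b k = 0 := by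
        intro k hk
        by_contra hbk
        exact hk (hno k (Finsupp.mem_support_iff.mpr hbk))
      apply hbne
      have hbi : b i = n := by
        fin_cases i
        · have h1 := hz 1 (by decide); have h2 := hz 2 (by decide); show b 0 = n; omega
        · have h1 := hz 0 (by decide); have h2 := hz 2 (by decide); show b 1 = n; omega
        · have h1 := hz 0 (by decide); have h2 := hz 1 (by decide); show b 2 = n; omega
      ext k
      by_cases hk : k = i
      · subst hk; simp [hbi]
      · simp [Finsupp.single_apply, Ne.symm hk, hz k hk, hk]
    obtain ⟨k, hk, hki⟩ := hex
    rw [Finset.prod_eq_zero hk, mul_zero]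
    have : b k ≠ 0 := Finsupp.mem_support_iff.mp hk
    rw [Pi.single_apply, if_neg hki, zero_pow this]
  · intro h
    rw [MvPolynomial.notMem_support_iff.mp h, zero_mul]

lemma finsupp_eq3 (d e : Fin 3 →₀ ℕ) (h0 : d 0 = e 0) (h1 : d 1 = e 1) (h2 : d 2 = e 2) :
    d = e := by
  ext k
  fin_cases k
  · exact h0
  · exact h1
  · exact h2

end CubicAux

open CubicAux

theorem cubic_singular_at_two_points_splits
    (F : MvPolynomial (Fin 3) ℂ) (hF : F.IsHomogeneous 3)
    (P Q : Fin 3 → ℂ) (hP : P ≠ 0) (hQ : Q ≠ 0)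
    (hPQ : ∀ c : ℂ, Q ≠ c • P)
    (hFP : eval P F = 0) (hFQ : eval Q F = 0)
    (hdP : ∀ i : Fin 3, eval P (pderiv i F) = 0)
    (hdQ : ∀ i : Fin 3, eval Q (pderiv i F) = 0) :
    ∃ L C : MvPolynomial (Fin 3) ℂ,
      L.IsHomogeneous 1 ∧ L ≠ 0 ∧ eval P L = 0 ∧ eval Q L = 0 ∧
      C.IsHomogeneous 2 ∧ eval P C = 0 ∧ eval Q C = 0 ∧ F = L * C := by
  classical
  -- Step 1: a basis W with W 0 = P, W 1 = Q
  have hind2 : LinearIndependent ℂ ![P, Q] := by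
    rw [linearIndependent_fin2]
    refine ⟨hQ, fun a ha => ?_⟩
    have ha' : a • Q = P := by simpa using ha
    have hane : a ≠ 0 := by
      rintro rfl
      rw [zero_smul] at ha'
      exact hP ha'.symm
    exact hPQ a⁻¹ (by rw [← ha', smul_smul, inv_mul_cancel₀ hane, one_smul])
  obtain ⟨Rv, hind3⟩ := exists_linearIndependent_snoc_of_lt_finrank hind2
    (by simp [Module.finrank_pi])
  set W : Fin 3 → (Fin 3 → ℂ) := Fin.snoc ![P, Q] Rv with hWdef
  have hW0 : W 0 = P := by
    have h : (0 : Fin 3) = Fin.castSucc 0 := rfl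
    rw [hWdef, h, Fin.snoc_castSucc]
    rfl
  have hW1 : W 1 = Q := by
    have h : (1 : Fin 3) = Fin.castSucc 1 := rfl
    rw [hWdef, h, Fin.snoc_castSucc]
    rfl
  have hcard : Fintype.card (Fin 3) = Module.finrank ℂ (Fin 3 → ℂ) := by
    simp [Module.finrank_pi]
  let b : Module.Basis (Fin 3) ℂ (Fin 3 → ℂ) := basisOfLinearIndependentOfCardEqFinrank hind3 hcard
  have hb : ⇑b = W := coe_basisOfLinearIndependentOfCardEqFinrank _ _
  set M : Matrix (Fin 3) (Fin 3) ℂ := Matrix.of (fun i j => W j i) with hMdef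
  have hdet : IsUnit M.det := by
    have h1 : M = (Pi.basisFun ℂ (Fin 3)).toMatrix W := by
      ext i j
      simp [hMdef, Module.Basis.toMatrix_apply]
    have h2 := (Pi.basisFun ℂ (Fin 3)).isUnit_det b
    rwa [Module.Basis.det_apply, hb, ← h1] at h2
  have hMinv : M⁻¹ * M = 1 := Matrix.nonsing_inv_mul M hdet
  have hMinv' : M * M⁻¹ = 1 := Matrix.mul_nonsing_inv M hdet
  have hMW : ∀ k, M.mulVec (Pi.single k 1) = W k := by
    intro k
    funext i
    simp [Matrix.mulVec, dotProduct, hMdef, Pi.single_apply, mul_ite,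
      Finset.sum_ite_eq']
  -- Step 2: the transformed cubic G
  set G := lsub M F with hG
  have homog_lin : ∀ (N : Matrix (Fin 3) (Fin 3) ℂ) (i : Fin 3),
      ((fun i => ∑ j, MvPolynomial.C (N i j) * X j) i).IsHomogeneous 1 := by
    intro N i
    apply MvPolynomial.IsHomogeneous.sum
    intro j _
    simpa using (isHomogeneous_C (Fin 3) (N i j)).mul (isHomogeneous_X ℂ j)
  have hG3 : G.IsHomogeneous 3 := by
    have := hF.aeval _ (homog_lin M)
    simpa [lsub, hG] using this
  have e0G : eval (Pi.single (0 : Fin 3) (1 : ℂ)) G = 0 := by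
    rw [hG, eval_lsub, hMW 0, hW0, hFP]
  have e1G : eval (Pi.single (1 : Fin 3) (1 : ℂ)) G = 0 := by
    rw [hG, eval_lsub, hMW 1, hW1, hFQ]
  have e0dG : ∀ j, eval (Pi.single (0 : Fin 3) (1 : ℂ)) (pderiv j G) = 0 := by
    intro j
    rw [hG, pderiv_lsub, map_sum]
    apply Finset.sum_eq_zero
    intro i _
    rw [map_mul, eval_lsub, hMW 0, hW0, hdP i, zero_mul]
  have e1dG : ∀ j, eval (Pi.single (1 : Fin 3) (1 : ℂ)) (pderiv j G) = 0 := by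
    intro j
    rw [hG, pderiv_lsub, map_sum]
    apply Finset.sum_eq_zero
    intro i _
    rw [map_mul, eval_lsub, hMW 1, hW1, hdQ i, zero_mul]
  have hpdG : ∀ j, (pderiv j G).IsHomogeneous 2 := by
    intro j
    rw [isHomogeneous_iff3]
    intro d hd
    rw [CubicAux.coeff_pderiv] at hd
    have hne : coeff (d + Finsupp.single j 1) G ≠ 0 := by
      intro h
      rw [h, mul_zero] at hd
      exact hd rfl
    have h3 := (isHomogeneous_iff3 G 3).mp hG3 _ hne
    simp only [Finsupp.add_apply] at h3
    have hj : (Finsupp.single j 1 : Fin 3 →₀ ℕ) 0 + (Finsupp.single j 1 : Fin 3 →₀ ℕ) 1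
        + (Finsupp.single j 1 : Fin 3 →₀ ℕ) 2 = 1 := by
      fin_cases j <;> simp [Finsupp.single_apply]
    omega
  -- Step 3: six coefficients of G vanish
  have c1 : coeff (Finsupp.single 0 3) G = 0 := by
    rw [← eval_single G hG3 0]
    exact e0G
  have c4 : coeff (Finsupp.single 1 3) G = 0 := by
    rw [← eval_single G hG3 1]
    exact e1G
  have key : ∀ i j : Fin 3, eval (Pi.single i (1 : ℂ)) (pderiv j G) = 0 →
      coeff (Finsupp.single i 2 + Finsupp.single j 1) G = 0 := by
    intro i j h
    have h2 := eval_single _ (hpdG j) i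
    rw [h, CubicAux.coeff_pderiv] at h2
    have hne : (((Finsupp.single i 2 : Fin 3 →₀ ℕ) j : ℂ) + 1) ≠ 0 := by
      exact_mod_cast Nat.succ_ne_zero ((Finsupp.single i 2 : Fin 3 →₀ ℕ) j)
    exact (mul_eq_zero.mp h2.symm).resolve_left hne
  have c2 : coeff (Finsupp.single 0 2 + Finsupp.single 1 1) G = 0 := key 0 1 (e0dG 1)
  have c3 : coeff (Finsupp.single 0 2 + Finsupp.single 2 1) G = 0 := key 0 2 (e0dG 2)
  have c5 : coeff (Finsupp.single 1 2 + Finsupp.single 0 1) G = 0 := key 1 0 (e1dG 0)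
  have c6 : coeff (Finsupp.single 1 2 + Finsupp.single 2 1) G = 0 := key 1 2 (e1dG 2)
  -- Step 4: X 2 divides G
  set D := G.divMonomial (Finsupp.single 2 1) with hD
  have hmod : G.modMonomial (Finsupp.single 2 1) = 0 := by
    apply MvPolynomial.ext
    intro d
    rw [coeff_zero]
    by_cases hle : Finsupp.single 2 1 ≤ d
    · exact MvPolynomial.coeff_modMonomial_of_le G hle
    · rw [MvPolynomial.coeff_modMonomial_of_not_le G hle]
      by_contra hne
      have hd3 : d 0 + d 1 + d 2 = 3 := (isHomogeneous_iff3 G 3).mp hG3 d hne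
      have hd2 : d 2 = 0 := by
        by_contra h
        exact hle (Finsupp.single_le_iff.mpr (by omega))
      have h0 : d 0 = 0 ∨ d 0 = 1 ∨ d 0 = 2 ∨ d 0 = 3 := by omega
      rcases h0 with h0 | h0 | h0 | h0
      · have hd : d = Finsupp.single 1 3 :=
          finsupp_eq3 _ _ (by simp [Finsupp.single_apply]; omega)
            (by simp [Finsupp.single_apply]; omega) (by simp [Finsupp.single_apply]; omega)
        rw [hd] at hne
        exact hne c4
      · have hd : d = Finsupp.single 1 2 + Finsupp.single 0 1 :=
          finsupp_eq3 _ _ (by simp [Finsupp.single_apply]; omega)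
            (by simp [Finsupp.single_apply]; omega) (by simp [Finsupp.single_apply]; omega)
        rw [hd] at hne
        exact hne c5
      · have hd : d = Finsupp.single 0 2 + Finsupp.single 1 1 :=
          finsupp_eq3 _ _ (by simp [Finsupp.single_apply]; omega)
            (by simp [Finsupp.single_apply]; omega) (by simp [Finsupp.single_apply]; omega)
        rw [hd] at hne
        exact hne c2
      · have hd : d = Finsupp.single 0 3 :=
          finsupp_eq3 _ _ (by simp [Finsupp.single_apply]; omega)
            (by simp [Finsupp.single_apply]; omega) (by simp [Finsupp.single_apply]; omega)
        rw [hd] at hne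
        exact hne c1
  have hGD : G = X 2 * D := by
    have h := MvPolynomial.divMonomial_add_modMonomial_single G 2
    rw [hmod, add_zero] at h
    exact h.symm
  have hD2 : D.IsHomogeneous 2 := by
    rw [isHomogeneous_iff3]
    intro d hd
    rw [hD, MvPolynomial.coeff_divMonomial] at hd
    have h3 := (isHomogeneous_iff3 G 3).mp hG3 _ hd
    simp only [Finsupp.add_apply] at h3
    have hj : (Finsupp.single (2 : Fin 3) 1 : Fin 3 →₀ ℕ) 0
        + (Finsupp.single (2 : Fin 3) 1 : Fin 3 →₀ ℕ) 1
        + (Finsupp.single (2 : Fin 3) 1 : Fin 3 →₀ ℕ) 2 = 1 := by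
      simp [Finsupp.single_apply]
    omega
  have hDe0 : eval (Pi.single (0 : Fin 3) (1 : ℂ)) D = 0 := by
    rw [eval_single D hD2 0, hD, MvPolynomial.coeff_divMonomial, add_comm]
    exact c3
  have hDe1 : eval (Pi.single (1 : Fin 3) (1 : ℂ)) D = 0 := by
    rw [eval_single D hD2 1, hD, MvPolynomial.coeff_divMonomial, add_comm]
    exact c6
  -- Step 5: pull back along the inverse substitution
  refine ⟨lsub M⁻¹ (X 2), lsub M⁻¹ D, ?_, ?_, ?_, ?_, ?_, ?_, ?_, ?_⟩
  · have := (isHomogeneous_X ℂ (2 : Fin 3)).aeval _ (homog_lin M⁻¹)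
    simpa [lsub] using this
  · intro h
    have h1 : eval (W 2) (lsub M⁻¹ (X 2)) = 1 := by
      rw [eval_lsub, ← hMW 2, Matrix.mulVec_mulVec, hMinv, Matrix.one_mulVec, eval_X,
        Pi.single_eq_same]
    rw [h] at h1
    simp at h1
  · rw [eval_lsub, ← hW0, ← hMW 0, Matrix.mulVec_mulVec, hMinv, Matrix.one_mulVec, eval_X]
    simp [Pi.single_apply]
  · rw [eval_lsub, ← hW1, ← hMW 1, Matrix.mulVec_mulVec, hMinv, Matrix.one_mulVec, eval_X]
    simp [Pi.single_apply]
  · have := hD2.aeval _ (homog_lin M⁻¹)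
    simpa [lsub] using this
  · rw [eval_lsub, ← hW0, ← hMW 0, Matrix.mulVec_mulVec, hMinv, Matrix.one_mulVec]
    exact hDe0
  · rw [eval_lsub, ← hW1, ← hMW 1, Matrix.mulVec_mulVec, hMinv, Matrix.one_mulVec]
    exact hDe1
  · rw [← map_mul, ← hGD, hG, lsub_lsub, hMinv', lsub_one]
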